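/- For k ≥ 3 and sufficiently large n (and sufficiently large field F), rank(W_k^{⊗n}) ≤ (n(k−1)+1)·2^n < k^n = rank(W_k)^n. In particular rank(W₃^{⊗7}) < rank(W₃)^7 and rank(W₈^{⊗2}) < rank(W₈)^2. -/

import Mathlib

open scoped BigOperators

universe u v

noncomputable section

variable {F : Type v}

/-- Tensor rank: the least `r` such that `T` is a sum of `r` simple tensors. -/
def tRank {ι : Type*} [Fintype ι] [DecidableEq ι] {γ : ι → Type*} [∀ i, Fintype (γ i)]
    [Field F] (T : (∀ i, γ i) → F) : ℕ :=
  sInf {r | ∃ v : Fin r → ∀ i, γ i → F, ∀ x, T x = ∑ j, ∏ i, v j i (x i)}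

/-- Tensor product of a `ι`-indexed tensor and a `κ`-indexed tensor (no grouping). -/
def tProd [Field F] {ι κ : Type*} {γ : ι → Type u} {δ : κ → Type u}
    (S : (∀ i, γ i) → F) (T : (∀ j, δ j) → F) : (∀ i : ι ⊕ κ, Sum.elim γ δ i) → F :=
  fun x => S (fun i => x (Sum.inl i)) * T (fun j => x (Sum.inr j))

instance sumElimFintype {ι κ : Type*} {γ : ι → Type u} {δ : κ → Type u}
    [hγ : ∀ i, Fintype (γ i)] [hδ : ∀ j, Fintype (δ j)] :
    ∀ i : ι ⊕ κ, Fintype (Sum.elim γ δ i)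
  | Sum.inl i => hγ i
  | Sum.inr j => hδ j

/-- Tensor Kronecker product of two tensors with the same index set. -/
def tKron [Field F] {ι : Type*} {γ δ : ι → Type*}
    (S : (∀ i, γ i) → F) (T : (∀ i, δ i) → F) : (∀ i, γ i × δ i) → F :=
  fun x => S (fun i => (x i).1) * T (fun i => (x i).2)

/-- `n`-fold tensor product power of a tensor (no grouping), a tensor indexed by `Fin n × ι`. -/
def tPow [Field F] {ι : Type*} {γ : ι → Type*} (T : (∀ i, γ i) → F) (n : ℕ) :
    (∀ p : Fin n × ι, γ p.2) → F :=
  fun x => ∏ j : Fin n, T (fun i => x (j, i))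

/-- Restriction `t ≥ s`: `s` is obtained from `t` by applying linear maps on each factor. -/
def Restricts [Field F] {ι : Type*} [Fintype ι] [DecidableEq ι]
    {γ : ι → Type*} {δ : ι → Type*} [∀ i, Fintype (γ i)]
    (t : (∀ i, γ i) → F) (s : (∀ i, δ i) → F) : Prop :=
  ∃ A : ∀ i, δ i → γ i → F, ∀ x, (∑ y : ∀ i, γ i, (∏ i, A i (x i) (y i)) * t y) = s x

/-- Degeneration `t ⊵_d^e s` with approximation degree `d` and error degree `e`. -/
def Degen [Field F] {ι : Type*} [Fintype ι] [DecidableEq ι]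
    {γ : ι → Type*} {δ : ι → Type*} [∀ i, Fintype (γ i)]
    (t : (∀ i, γ i) → F) (s : (∀ i, δ i) → F) (d e : ℕ) : Prop :=
  ∃ A : ∀ i, δ i → γ i → Polynomial F, ∃ s' : Fin e → ((∀ i, δ i) → F),
    ∀ x, (∑ y : ∀ i, γ i, (∏ i, A i (x i) (y i)) * Polynomial.C (t y)) =
      Polynomial.C (s x) * Polynomial.X ^ d +
      ∑ j : Fin e, Polynomial.C (s' j x) * Polynomial.X ^ (d + 1 + (j : ℕ))

/-- The rank-`r` order-`k` unit tensor `⟨r⟩_k = ∑_j b_j^{⊗k}`. -/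
def unitTensor (F : Type v) [Field F] (r k : ℕ) : (Fin k → Fin r) → F :=
  fun x => ∑ j : Fin r, ∏ i : Fin k, if x i = j then 1 else 0

/-- The tensor `W_k = ∑_{type(i)=(k-1,1)} b_{i₁} ⊗ ⋯ ⊗ b_{i_k}` in `(F²)^{⊗k}`. -/
def Wtensor (F : Type v) [Field F] (k : ℕ) : (Fin k → Fin 2) → F :=
  fun x => if (∑ i, (x i : ℕ)) = 1 then 1 else 0

/-- `R^e(s)`: border rank with error degree at most `e`. -/
def errRank [Field F] {k : ℕ} {γ : Fin k → Type*} [∀ i, Fintype (γ i)]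
    (e : ℕ) (s : (∀ i, γ i) → F) : ℕ :=
  sInf {r | ∃ d, Degen (unitTensor F r k) s d e}

/-- `R_d(s)`: border rank with approximation degree `d`. -/
def degRank [Field F] {k : ℕ} {γ : Fin k → Type*} [∀ i, Fintype (γ i)]
    (d : ℕ) (s : (∀ i, γ i) → F) : ℕ :=
  sInf {r | ∃ e, Degen (unitTensor F r k) s d e}

/-- Border rank over ℂ: the least `r` such that `T` is a limit of tensors of rank `≤ r`. -/
def tBorderRank {ι : Type*} [Fintype ι] [DecidableEq ι] {γ : ι → Type*} [∀ i, Fintype (γ i)]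
    (T : (∀ i, γ i) → ℂ) : ℕ :=
  sInf {r | T ∈ closure {T' : (∀ i, γ i) → ℂ | tRank T' ≤ r}}

end

-- ===== Auxiliary lemmas =====

section Aux

variable {F : Type v}

lemma fin2_cases' (v : Fin 2) : v = 0 ∨ v = 1 := by
  fin_cases v
  · exact Or.inl rfl
  · exact Or.inr rfl

lemma fin2_ne_one' {v : Fin 2} (h : v ≠ 1) : v = 0 := (fin2_cases' v).resolve_right h

lemma sum_val_eq_card_filter' {k : ℕ} (x : Fin k → Fin 2) :
    (∑ i, (x i : ℕ)) = (Finset.univ.filter (fun i => x i = 1)).card := by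
  rw [Finset.card_filter]
  apply Finset.sum_congr rfl
  intro i _
  rcases fin2_cases' (x i) with h | h <;> simp [h]

lemma wtensor_decomp' [Field F] (k : ℕ) (x : Fin k → Fin 2) :
    Wtensor F k x = ∑ j : Fin k, ∏ i : Fin k,
      (if i = j then (if x i = 1 then (1:F) else 0) else (if x i = 0 then 1 else 0)) := by
  classical
  set s1 := Finset.univ.filter (fun i => x i = 1) with hs1
  have key : ∀ j : Fin k, (∀ i, x i = (if i = j then 1 else 0)) ↔ s1 = {j} := by
    intro j
    constructor
    · intro h
      ext i
      simp only [hs1, Finset.mem_filter, Finset.mem_univ, true_and, Finset.mem_singleton]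
      rw [h i]
      by_cases hij : i = j <;> simp [hij]
    · intro h i
      by_cases hij : i = j
      · subst hij
        have : i ∈ s1 := h ▸ Finset.mem_singleton_self i
        simp only [hs1, Finset.mem_filter] at this
        simp [this.2]
      · have : i ∉ s1 := by rw [h]; simpa using hij
        simp only [hs1, Finset.mem_filter, Finset.mem_univ, true_and] at this
        simp [hij, fin2_ne_one' this]
  have hfac : ∀ j : Fin k, (∏ i : Fin k,
      (if i = j then (if x i = 1 then (1:F) else 0) else (if x i = 0 then 1 else 0)))
      = if s1 = {j} then 1 else 0 := by
    intro j
    have step1 : (∏ i : Fin k,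
        (if i = j then (if x i = 1 then (1:F) else 0) else (if x i = 0 then 1 else 0)))
        = if (∀ i, x i = (if i = j then 1 else 0)) then 1 else 0 := by
      have hcongr : (∏ i : Fin k,
          (if i = j then (if x i = 1 then (1:F) else 0) else (if x i = 0 then 1 else 0)))
          = ∏ i : Fin k, (if x i = (if i = j then 1 else 0) then (1:F) else 0) := by
        apply Finset.prod_congr rfl
        intro i _
        by_cases hij : i = j
        · subst hij; simp
        · simp [hij]
      rw [hcongr, Fintype.prod_boole]
      convert rfl
    rw [step1]
    exact if_congr (key j) rfl rfl
  simp only [hfac]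
  rw [Wtensor, sum_val_eq_card_filter', ← hs1]
  by_cases hc : s1.card = 1
  · obtain ⟨j0, hj0⟩ := Finset.card_eq_one.mp hc
    have : ∀ j : Fin k, (s1 = {j}) ↔ (j = j0) := by
      intro j
      rw [hj0]
      constructor
      · intro h; exact (Finset.singleton_injective h).symm
      · intro h; rw [h]
    simp only [this]
    simp [hc]
  · have : ∀ j : Fin k, s1 ≠ {j} := by
      intro j h
      exact hc (h ▸ Finset.card_singleton j)
    simp only [if_neg (this _)]
    simp [hc]

lemma Eform' [Field F] {m : ℕ} (y : Fin m → Fin 2) :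
    (∏ i, (if y i = 0 then (1:F) else 0)) = if (∑ i, (y i : ℕ)) = 0 then 1 else 0 := by
  classical
  by_cases hy : ∀ i, y i = 0
  · rw [if_pos (by simp [hy]), Finset.prod_eq_one (fun i _ => by simp [hy i])]
  · push_neg at hy
    obtain ⟨i0, hi0⟩ := hy
    rw [Finset.prod_eq_zero (Finset.mem_univ i0) (by simp [hi0])]
    have hval : (y i0 : ℕ) ≠ 0 := by
      intro hz
      exact hi0 (Fin.ext (by simpa using hz))
    have hpos : 0 < ∑ i, (y i : ℕ) :=
      lt_of_lt_of_le (Nat.pos_of_ne_zero hval)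
        (Finset.single_le_sum (f := fun i => (y i : ℕ)) (fun _ _ => Nat.zero_le _)
          (Finset.mem_univ i0))
    rw [if_neg (by omega)]

lemma wtensor_lower' [Field F] : ∀ (m : ℕ) (c : F) (r : ℕ) (v : Fin r → Fin m → Fin 2 → F),
    (∀ x, Wtensor F m x + c * ∏ i, (if x i = 0 then (1:F) else 0) = ∑ j, ∏ i, v j i (x i)) →
    m ≤ r := by
  intro m
  induction m with
  | zero => intro _ _ _ _; exact Nat.zero_le _
  | succ m IH =>
    intro c r v h
    have h10 : (1 : Fin 2) ≠ 0 := by decide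
    have h1 : ∀ y : Fin m → Fin 2,
        (if (∑ i, (y i : ℕ)) = 0 then (1:F) else 0) =
        ∑ j, v j 0 1 * ∏ i, v j i.succ (y i) := by
      intro y
      have hthis := h (Fin.cons 1 y)
      simp only [Wtensor, Fin.sum_univ_succ, Fin.prod_univ_succ, Fin.cons_zero, Fin.cons_succ,
        Fin.val_one, if_neg h10, zero_mul, mul_zero, add_zero] at hthis
      have hcond : ((1 + ∑ i, ((y i : ℕ))) = 1) ↔ ((∑ i, ((y i : ℕ))) = 0) := by omega
      rw [if_congr hcond rfl rfl] at hthis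
      exact hthis
    have h0 : ∀ y : Fin m → Fin 2,
        (if (∑ i, (y i : ℕ)) = 1 then (1:F) else 0) + c * ∏ i, (if y i = 0 then (1:F) else 0) =
        ∑ j, v j 0 0 * ∏ i, v j i.succ (y i) := by
      intro y
      have hthis := h (Fin.cons 0 y)
      simp only [Wtensor, Fin.sum_univ_succ, Fin.prod_univ_succ, Fin.cons_zero, Fin.cons_succ,
        Fin.val_zero, if_true, one_mul, zero_add] at hthis
      exact hthis
    match r, v, h0, h1 with
    | 0, v, h0, h1 =>
      exfalso
      have := h1 (fun _ => 0)
      simp at this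
    | (r + 1), v, h0, h1 =>
      have hne : ∃ j : Fin (r+1), v j 0 1 * ∏ i : Fin m, v j i.succ ((0:Fin 2)) ≠ 0 := by
        by_contra hc
        push_neg at hc
        have := h1 (fun _ => 0)
        simp only [Finset.sum_eq_zero (fun j _ => hc j)] at this
        simp at this
      obtain ⟨j0, hj0⟩ := hne
      have hu : v j0 0 1 ≠ 0 := fun hz => hj0 (by rw [hz, zero_mul])
      suffices hsuff : m ≤ r by omega
      rcases Nat.eq_zero_or_pos m with hm | hm
      · omega
      · set q : F := v j0 0 0 * (v j0 0 1)⁻¹ with hq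
        set coef : Fin r → F := fun j => v (j0.succAbove j) 0 0 - q * v (j0.succAbove j) 0 1
          with hcoef
        set v' : Fin r → Fin m → Fin 2 → F :=
          fun j i b => (if i = ⟨0, hm⟩ then coef j else 1) * v (j0.succAbove j) i.succ b with hv'
        apply IH (c - q) r v'
        intro y
        have hR : (∑ j, ∏ i, v' j i (y i)) =
            ∑ j, coef j * ∏ i, v (j0.succAbove j) i.succ (y i) := by
          apply Finset.sum_congr rfl
          intro j _
          rw [hv']
          simp only
          rw [Finset.prod_mul_distrib, Finset.prod_ite_eq' Finset.univ (⟨0, hm⟩ : Fin m)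
            (fun _ => coef j)]
          simp
        rw [Wtensor, hR]
        have h1y := h1 y
        have h0y := h0 y
        rw [Fin.sum_univ_succAbove _ j0] at h1y h0y
        rw [← Eform' y] at h1y
        have hsplit : (∑ j, coef j * ∏ i, v (j0.succAbove j) i.succ (y i)) =
            (∑ j, v (j0.succAbove j) 0 0 * ∏ i, v (j0.succAbove j) i.succ (y i)) -
            q * (∑ j, v (j0.succAbove j) 0 1 * ∏ i, v (j0.succAbove j) i.succ (y i)) := by
          rw [Finset.mul_sum, ← Finset.sum_sub_distrib]
          apply Finset.sum_congr rfl
          intro j _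
          simp only [hcoef]; ring
        rw [hsplit]
        have hinv : v j0 0 1 * (v j0 0 1)⁻¹ = 1 := mul_inv_cancel₀ hu
        linear_combination h0y - q * h1y -
          ((v j0 0 1 * ∏ i, v j0 i.succ (y i)) * hq) -
          ((v j0 0 0 * ∏ i, v j0 i.succ (y i)) * hinv)

lemma tRank_le_card' [Field F] {ι : Type*} [Fintype ι] [DecidableEq ι] {γ : ι → Type*}
    [∀ i, Fintype (γ i)] (T : (∀ i, γ i) → F) {A : Type*} [Fintype A]
    (w : A → ∀ i, γ i → F) (h : ∀ x, T x = ∑ a : A, ∏ i, w a i (x i)) :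
    tRank T ≤ Fintype.card A := by
  apply Nat.sInf_le
  refine ⟨fun j => w ((Fintype.equivFin A).symm j), fun x => ?_⟩
  rw [h x]
  exact (Equiv.sum_comp (Fintype.equivFin A).symm (fun a => ∏ i, w a i (x i))).symm

lemma dual_vandermonde' [Field F] {M : ℕ} (t : Fin M → F) (ht : Function.Injective t) :
    ∃ μ : Fin M → F, ∀ e : Fin M,
      (∑ m, μ m * t m ^ (e : ℕ)) = if (e : ℕ) = 0 then 1 else 0 := by
  classical
  rcases Nat.eq_zero_or_pos M with hM | hM
  · subst hM; exact ⟨fun m => 0, fun e => absurd e.2 (by omega)⟩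
  set V : Matrix (Fin M) (Fin M) F := (Matrix.vandermonde t).transpose with hV
  have hdet : IsUnit V.det := by
    rw [Matrix.det_transpose]
    exact (Matrix.det_vandermonde_ne_zero_iff.mpr ht).isUnit
  set b : Fin M → F := Pi.single ⟨0, hM⟩ 1 with hb
  refine ⟨V⁻¹.mulVec b, fun e => ?_⟩
  have : V.mulVec (V⁻¹.mulVec b) = b := by
    rw [Matrix.mulVec_mulVec, Matrix.mul_nonsing_inv _ hdet, Matrix.one_mulVec]
  have he := congrFun this e
  simp only [Matrix.mulVec, dotProduct] at he
  have hVe : ∀ m, V e m = t m ^ (e : ℕ) := fun m => rfl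
  calc (∑ m, V⁻¹.mulVec b m * t m ^ (e : ℕ))
      = ∑ m, V e m * V⁻¹.mulVec b m := by
        apply Finset.sum_congr rfl; intro m _; rw [hVe, mul_comm]
    _ = b e := he
    _ = if (e : ℕ) = 0 then 1 else 0 := by
        rw [hb, Pi.single_apply]
        simp [Fin.ext_iff]

lemma tpow_rank_le' [Field F] [Infinite F] (k n : ℕ) (hk : 1 ≤ k) (hn : 1 ≤ n) :
    tRank (tPow (Wtensor F k) n) ≤ (n * (k - 1) + 1) * 2 ^ n := by
  classical
  set M := n * (k - 1) + 1 with hM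
  have hinf : ({(0:F)}ᶜ : Set F).Infinite :=
    Set.Finite.infinite_compl (Set.finite_singleton 0)
  set emb := hinf.natEmbedding with hemb
  set t : Fin M → F := fun m => (emb (m : ℕ) : F) with htdef
  have ht : Function.Injective t := by
    intro a b hab
    have := emb.injective (Subtype.ext hab)
    exact Fin.ext (by exact_mod_cast congrArg id this)
  have htz : ∀ m, t m ≠ 0 := fun m => (emb (m : ℕ)).2
  obtain ⟨μ, hμ⟩ := dual_vandermonde' t ht
  set ν : Fin M → F := fun m => μ m * (t m ^ n)⁻¹ with hν
  set p0 : Fin n × Fin k := (⟨0, hn⟩, ⟨0, hk⟩) with hp0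
  set w : ((Fin n → Fin 2) × Fin M) → (Fin n × Fin k) → Fin 2 → F :=
    fun a p b =>
      (if p = p0 then (∏ j : Fin n, (if a.1 j = 1 then (1:F) else -1)) * ν a.2 else 1) *
      (if b = 0 then 1 else (if a.1 p.1 = 1 then t a.2 else 0)) with hw
  have key : ∀ x, tPow (Wtensor F k) n x = ∑ a, ∏ p, w a p (x p) := by
    intro x
    set d : Fin n → ℕ := fun j => ∑ i : Fin k, ((x (j, i) : ℕ)) with hd
    have hterm : ∀ (s : Fin n → Fin 2) (m : Fin M),
        (∏ p, w (s, m) p (x p)) =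
        ν m * ∏ j, ((if s j = 1 then (1:F) else -1) *
          (if s j = 1 then t m else 0) ^ d j) := by
      intro s m
      rw [hw]
      simp only
      rw [Finset.prod_mul_distrib]
      rw [Finset.prod_ite_eq' Finset.univ p0
        (fun _ => (∏ j : Fin n, (if s j = 1 then (1:F) else -1)) * ν m)]
      rw [if_pos (Finset.mem_univ p0)]
      have hB : (∏ p : Fin n × Fin k, (if x p = 0 then (1:F) else (if s p.1 = 1 then t m else 0)))
          = ∏ j, (if s j = 1 then t m else 0) ^ d j := by
        rw [Fintype.prod_prod_type]
        apply Finset.prod_congr rfl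
        intro j _
        rw [hd]
        rw [← Finset.prod_pow_eq_pow_sum]
        apply Finset.prod_congr rfl
        intro i _
        rcases fin2_cases' (x (j, i)) with h | h
        · simp [h]
        · simp [h]
      rw [hB, Finset.prod_mul_distrib]
      ring
    have main : (∑ a : (Fin n → Fin 2) × Fin M, ∏ p, w a p (x p)) =
        ∑ m, ν m * ∏ j, (t m ^ d j - (0:F) ^ d j) := by
      rw [Fintype.sum_prod_type]
      rw [Finset.sum_comm]
      apply Finset.sum_congr rfl
      intro m _
      calc (∑ s : Fin n → Fin 2, ∏ p, w (s, m) p (x p))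
          = ∑ s : Fin n → Fin 2, ν m * ∏ j, ((if s j = 1 then (1:F) else -1) *
              (if s j = 1 then t m else 0) ^ d j) :=
            Finset.sum_congr rfl (fun s _ => hterm s m)
        _ = ν m * ∑ s : Fin n → Fin 2, ∏ j, ((if s j = 1 then (1:F) else -1) *
              (if s j = 1 then t m else 0) ^ d j) := by rw [Finset.mul_sum]
        _ = ν m * ∏ j, (∑ b : Fin 2, ((if b = 1 then (1:F) else -1) *
              (if b = 1 then t m else 0) ^ d j)) := by
            congr 1
            have hps := Finset.prod_univ_sum (fun _ : Fin n => (Finset.univ : Finset (Fin 2)))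
              (fun j b => (if b = 1 then (1:F) else -1) * (if b = 1 then t m else 0) ^ d j)
            rw [Fintype.piFinset_univ] at hps
            exact hps.symm
        _ = ν m * ∏ j, (t m ^ d j - (0:F) ^ d j) := by
            congr 1
            apply Finset.prod_congr rfl
            intro j _
            rw [Fin.sum_univ_two]
            simp only [if_neg (show ¬((0:Fin 2) = 1) by decide), if_pos rfl, if_true]
            ring
    rw [main]
    have hT : tPow (Wtensor F k) n x = ∏ j, (if d j = 1 then (1:F) else 0) := rfl
    rw [hT]
    by_cases hA : ∃ j0, d j0 = 0
    · obtain ⟨j0, hj0⟩ := hA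
      rw [Finset.prod_eq_zero (Finset.mem_univ j0) (by simp [hj0])]
      symm
      apply Finset.sum_eq_zero
      intro m _
      rw [Finset.prod_eq_zero (Finset.mem_univ j0) (by rw [hj0]; simp), mul_zero]
    · push_neg at hA
      set D : ℕ := ∑ j, d j with hD
      have hd1 : ∀ j, 1 ≤ d j := fun j => Nat.one_le_iff_ne_zero.mpr (hA j)
      have hDn : n ≤ D := by
        calc n = ∑ _j : Fin n, 1 := by simp
          _ ≤ D := Finset.sum_le_sum (fun j _ => hd1 j)
      have hdk : ∀ j, d j ≤ k := by
        intro j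
        calc d j ≤ ∑ _i : Fin k, 1 :=
              Finset.sum_le_sum (fun i _ => Fin.is_le (x (j, i)))
          _ = k := by simp
      have hDnk : D ≤ n * k := by
        calc D ≤ ∑ _j : Fin n, k := Finset.sum_le_sum (fun j _ => hdk j)
          _ = n * k := by simp [mul_comm]
      have he : D - n < M := by
        obtain ⟨k', rfl⟩ : ∃ k', k = k' + 1 := ⟨k - 1, by omega⟩
        have h1 : n * (k' + 1) = n * k' + n := by ring
        have h2 : M = n * k' + 1 := by rw [hM]; simp
        omega
      have hsum : (∑ m, ν m * ∏ j, (t m ^ d j - (0:F) ^ d j)) =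
          if D - n = 0 then (1:F) else 0 := by
        have step : ∀ m : Fin M, ν m * ∏ j, (t m ^ d j - (0:F) ^ d j)
            = μ m * t m ^ (D - n) := by
          intro m
          have hzp : ∀ j : Fin n, ((0:F)) ^ d j = 0 := fun j => zero_pow (hA j)
          have hprod : (∏ j, (t m ^ d j - (0:F) ^ d j)) = t m ^ D := by
            rw [Finset.prod_congr rfl (fun j _ => by rw [hzp j, sub_zero])]
            rw [Finset.prod_pow_eq_pow_sum]
          rw [hprod, hν]
          simp only
          rw [show D = n + (D - n) by omega, pow_add]
          have hne : t m ^ n ≠ 0 := pow_ne_zero n (htz m)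
          field_simp
          ring
          rw [Nat.add_sub_cancel]
        rw [Finset.sum_congr rfl (fun m _ => step m)]
        exact hμ ⟨D - n, he⟩
      rw [hsum]
      by_cases hall : ∀ j, d j = 1
      · rw [Finset.prod_eq_one (fun j _ => by simp [hall j])]
        have : D = n := by
          rw [hD, Finset.sum_congr rfl (fun j _ => hall j)]
          simp
        rw [if_pos (by omega)]
      · push_neg at hall
        obtain ⟨j1, hj1⟩ := hall
        rw [Finset.prod_eq_zero (Finset.mem_univ j1) (by simp [hj1])]
        have hlt : n < D := by
          have : (∑ _j : Fin n, 1) < ∑ j, d j := by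
            apply Finset.sum_lt_sum (fun j _ => hd1 j)
            exact ⟨j1, Finset.mem_univ j1, by have := hd1 j1; omega⟩
          simpa using this
        rw [if_neg (by omega)]
  calc tRank (tPow (Wtensor F k) n) ≤ Fintype.card ((Fin n → Fin 2) × Fin M) :=
        tRank_le_card' _ w key
    _ = (n * (k - 1) + 1) * 2 ^ n := by
        simp [Fintype.card_prod, Fintype.card_fun, hM, mul_comm]

lemma numeric_ineq' (k : ℕ) (hk : 3 ≤ k) : ∀ n, 8 ≤ n → (n * (k - 1) + 1) * 2 ^ n < k ^ n := by
  intro n hn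
  induction n, hn using Nat.le_induction with
  | base =>
    have h6 : (729:ℕ) ≤ k ^ 6 := by
      calc (729:ℕ) = 3 ^ 6 := by norm_num
        _ ≤ k ^ 6 := Nat.pow_le_pow_left hk 6
    have hk8 : 2187 * k ≤ k ^ 8 := by
      calc 2187 * k = 3 * (729 * k) := by ring
        _ ≤ k * (k ^ 6 * k) := Nat.mul_le_mul hk (Nat.mul_le_mul_right k h6)
        _ = k ^ 8 := by ring
    have hL : (8 * (k - 1) + 1) * 2 ^ 8 ≤ 2048 * k := by
      have h1 : 8 * (k - 1) + 1 ≤ 8 * k := by omega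
      calc (8 * (k - 1) + 1) * 2 ^ 8 ≤ (8 * k) * 2 ^ 8 := Nat.mul_le_mul_right _ h1
        _ = 2048 * k := by norm_num; ring
    have : 2048 * k < 2187 * k := by omega
    linarith
  | succ n hn ih =>
    have hq : 2 ≤ k - 1 := by omega
    have h3 : 2 * ((n + 1) * (k - 1) + 1) ≤ 3 * (n * (k - 1) + 1) := by
      have e1 : (n + 1) * (k - 1) = n * (k - 1) + (k - 1) := by ring
      have e2 : 2 * (k - 1) ≤ n * (k - 1) := Nat.mul_le_mul_right _ (by omega)
      have e3 : 2 * (k - 1) ≤ 2 * (n * (k-1)) := by omega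
      omega
    calc ((n + 1) * (k - 1) + 1) * 2 ^ (n + 1)
        = (2 * ((n + 1) * (k - 1) + 1)) * 2 ^ n := by ring
      _ ≤ (3 * (n * (k - 1) + 1)) * 2 ^ n := Nat.mul_le_mul_right _ h3
      _ = 3 * ((n * (k - 1) + 1) * 2 ^ n) := by ring
      _ < 3 * k ^ n := Nat.mul_lt_mul_of_le_of_lt (le_refl 3) ih (by norm_num)
      _ ≤ k * k ^ n := Nat.mul_le_mul_right _ (by omega)
      _ = k ^ (n + 1) := by ring

lemma wtensor_rank' {F : Type v} [Field F] (k : ℕ) : tRank (Wtensor F k) = k := by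
  have hmem : k ∈ {r | ∃ v : Fin r → Fin k → Fin 2 → F,
      ∀ x, Wtensor F k x = ∑ j, ∏ i, v j i (x i)} := by
    refine ⟨fun j i b => if i = j then (if b = 1 then 1 else 0) else (if b = 0 then 1 else 0),
      fun x => ?_⟩
    exact wtensor_decomp' k x
  apply le_antisymm
  · exact Nat.sInf_le hmem
  · apply le_csInf ⟨k, hmem⟩
    rintro r ⟨v, hv⟩
    apply wtensor_lower' k 0 r v
    intro x
    rw [zero_mul, add_zero]
    exact hv x

end Aux

/-- for `k ≥ 3` and sufficiently large `n` (over a large enough field),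
`rank(W_k^{⊗n}) ≤ (n(k−1)+1)·2^n < k^n = rank(W_k)^n`; in particular for `(k,n) = (3,7)`
and `(k,n) = (8,2)`. -/
theorem rank_W_k_pow_not_mult {F : Type v} [Field F] [Infinite F] (k : ℕ) (hk : 3 ≤ k) :
    tRank (Wtensor F k) = k ∧
    (∃ N : ℕ, ∀ n ≥ N,
      tRank (tPow (Wtensor F k) n) ≤ (n * (k - 1) + 1) * 2 ^ n ∧
      (n * (k - 1) + 1) * 2 ^ n < k ^ n ∧
      tRank (tPow (Wtensor F k) n) < tRank (Wtensor F k) ^ n) ∧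
    tRank (tPow (Wtensor F 3) 7) < tRank (Wtensor F 3) ^ 7 ∧
    tRank (tPow (Wtensor F 8) 2) < tRank (Wtensor F 8) ^ 2 := by
  refine ⟨wtensor_rank' k, ⟨8, fun n hn => ?_⟩, ?_, ?_⟩
  · have hA := tpow_rank_le' (F := F) k n (by omega) (by omega)
    have hB := numeric_ineq' k hk n hn
    refine ⟨hA, hB, ?_⟩
    rw [wtensor_rank' k]
    exact lt_of_le_of_lt hA hB
  · have hA := tpow_rank_le' (F := F) 3 7 (by omega) (by omega)
    rw [wtensor_rank' 3]
    refine lt_of_le_of_lt hA (by norm_num)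
  · have hA := tpow_rank_le' (F := F) 8 2 (by omega) (by omega)
    rw [wtensor_rank' 8]
    refine lt_of_le_of_lt hA (by norm_num)
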